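/- Under the standing assumption, the entropy H(p) = −Σ_{g ∈ 𝓖} p(g) ln p(g) is a Lyapunov function for the recombination dynamics: along any differentiable solution p : [0,∞) → ℝ^𝓖_{>0} ∩ S_𝓖, the function t ↦ H(p(t)) is non-decreasing, and for each t, dH(p(t))/dt = 0 if and only if p(t) is an equilibrium (equivalently, p(t)(g) = ∏_{i ∈ 𝓛} p(t)ᵢ(gᵢ) for all g ∈ 𝓖). -/

import Mathlib

open Finset

/-- Recombination of gametes `g` and `h` following pattern `{I, Iᶜ}`:
`(g_I h_J)ᵢ = gᵢ` for `i ∈ I` and `= hᵢ` for `i ∈ J = Iᶜ`. -/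
def recomb {L : Type} [DecidableEq L] {A : L → Type} (I : Finset L)
    (g h : ∀ i, A i) : ∀ i, A i :=
  fun i => if i ∈ I then g i else h i

/-- The recombination vector field
`F(p) = (1/2) Σ_{g,h} Σ_{{I,J} ∈ 𝓟} c({I,J}) p(g) p(h) (g_I h_J + g_J h_I − g − h)`,
where the sum over unordered patterns `{I,J}` is written as `(1/2) Σ_{I : Finset L}`
(every unordered pattern `{I, Iᶜ}` corresponds to exactly two subsets `I` and `Iᶜ`;
the rate constants satisfy `c I = c Iᶜ`). -/
noncomputable def recF {L : Type} [Fintype L] [DecidableEq L] {A : L → Type}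
    [∀ i, Fintype (A i)] [∀ i, DecidableEq (A i)]
    (c : Finset L → ℝ) (p : (∀ i, A i) → ℝ) : (∀ i, A i) → ℝ :=
  fun x => (1 / 4) * ∑ g : ∀ i, A i, ∑ h : ∀ i, A i, ∑ I : Finset L,
    c I * p g * p h *
      ((if x = recomb I g h then 1 else 0) + (if x = recomb Iᶜ g h then 1 else 0)
        - (if x = g then 1 else 0) - (if x = h then 1 else 0))

/-- The marginal frequency `pᵢ(a) = Σ_{g : gᵢ = a} p(g)`. -/
noncomputable def marg {L : Type} [Fintype L] [DecidableEq L] {A : L → Type}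
    [∀ i, Fintype (A i)] [∀ i, DecidableEq (A i)]
    (p : (∀ i, A i) → ℝ) (i : L) (a : A i) : ℝ :=
  ∑ g : ∀ j, A j, if g i = a then p g else 0

set_option linter.unusedSectionVars false
set_option linter.unusedVariables false

section Aux
variable {L : Type} [Fintype L] [DecidableEq L] {A : L → Type}
  [∀ i, Fintype (A i)] [∀ i, DecidableEq (A i)]

lemma recomb_compl (I : Finset L) (g h : ∀ i, A i) : recomb Iᶜ g h = recomb I h g := by
  funext i; simp only [recomb, Finset.mem_compl]
  by_cases hi : i ∈ I <;> simp [hi]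

lemma recomb_left (I : Finset L) (g h : ∀ i, A i) :
    recomb I (recomb I g h) (recomb I h g) = g := by
  funext i; simp only [recomb]; by_cases hi : i ∈ I <;> simp [hi]

lemma recomb_right (I : Finset L) (g h : ∀ i, A i) :
    recomb I (recomb I h g) (recomb I g h) = h := by
  funext i; simp only [recomb]; by_cases hi : i ∈ I <;> simp [hi]

lemma recomb_empty (g h : ∀ i, A i) : recomb (∅ : Finset L) g h = h := by
  funext i; simp [recomb]

lemma recomb_univ (g h : ∀ i, A i) : recomb (univ : Finset L) g h = g := by
  funext i; simp [recomb]

lemma recomb_single (i : L) (g h : ∀ i, A i) :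
    recomb ({i} : Finset L) g h = Function.update h i (g i) := by
  funext j; simp only [recomb, Finset.mem_singleton, Function.update]
  by_cases hj : j = i
  · subst hj; simp
  · simp [hj]

lemma sum_prod_pi (f : ∀ i, A i → ℝ) :
    ∑ g : ∀ i, A i, ∏ i, f i (g i) = ∏ i, ∑ a, f i a := by
  rw [Finset.prod_univ_sum, Fintype.piFinset_univ]

lemma eq_recomb_iff (I : Finset L) (x g h : ∀ i, A i) :
    x = recomb I g h ↔ (∀ i ∈ I, x i = g i) ∧ (∀ i ∈ Iᶜ, x i = h i) := by
  constructor
  · rintro rfl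
    refine ⟨fun i hi => ?_, fun i hi => ?_⟩
    · simp [recomb, hi]
    · rw [Finset.mem_compl] at hi; simp [recomb, hi]
  · rintro ⟨h1, h2⟩; funext i; simp only [recomb]
    by_cases hi : i ∈ I
    · simp [hi, h1 i hi]
    · simp [hi, h2 i (Finset.mem_compl.mpr hi)]

lemma sum_recomb_pair (I : Finset L) (f : (∀ i, A i) → (∀ i, A i) → ℝ) :
    ∑ g : ∀ i, A i, ∑ h : ∀ i, A i, f (recomb I g h) (recomb I h g)
      = ∑ g : ∀ i, A i, ∑ h : ∀ i, A i, f g h := by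
  rw [← Fintype.sum_prod_type' (f := fun g h => f (recomb I g h) (recomb I h g)),
    ← Fintype.sum_prod_type' (f := f)]
  exact Fintype.sum_bijective (fun z => (recomb I z.1 z.2, recomb I z.2 z.1))
    (Function.Involutive.bijective fun z => by
      simp [Prod.ext_iff, recomb_left, recomb_right])
    _ _ (fun z => rfl)


section Aux2
variable {L : Type} [Fintype L] [DecidableEq L] {A : L → Type}
  [∀ i, Fintype (A i)] [∀ i, DecidableEq (A i)]

lemma sum_recF_mul (c : Finset L → ℝ) (q w : (∀ i, A i) → ℝ) :
    ∑ x : ∀ i, A i, recF c q x * w x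
      = (1/4) * ∑ g : ∀ i, A i, ∑ h : ∀ i, A i, ∑ I : Finset L,
          c I * q g * q h * (w (recomb I g h) + w (recomb Iᶜ g h) - w g - w h) := by
  have key : ∀ y : ∀ i, A i, ∑ x : ∀ i, A i, (if x = y then (1:ℝ) else 0) * w x = w y := by
    intro y; simp [ite_mul]
  calc ∑ x : ∀ i, A i, recF c q x * w x
      = ∑ x : ∀ i, A i, ∑ g : ∀ i, A i, ∑ h : ∀ i, A i, ∑ I : Finset L,
          (1/4) * (c I * q g * q h *
            ((if x = recomb I g h then (1:ℝ) else 0) + (if x = recomb Iᶜ g h then 1 else 0)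
              - (if x = g then 1 else 0) - (if x = h then 1 else 0)) * w x) := by
        apply Finset.sum_congr rfl; intro x _
        simp only [recF, Finset.mul_sum, Finset.sum_mul, mul_assoc]
    _ = ∑ g : ∀ i, A i, ∑ h : ∀ i, A i, ∑ I : Finset L, ∑ x : ∀ i, A i,
          (1/4) * (c I * q g * q h *
            ((if x = recomb I g h then (1:ℝ) else 0) + (if x = recomb Iᶜ g h then 1 else 0)
              - (if x = g then 1 else 0) - (if x = h then 1 else 0)) * w x) := by
        rw [Finset.sum_comm]
        apply Finset.sum_congr rfl; intro g _
        rw [Finset.sum_comm]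
        apply Finset.sum_congr rfl; intro h _
        rw [Finset.sum_comm]
    _ = (1/4) * ∑ g : ∀ i, A i, ∑ h : ∀ i, A i, ∑ I : Finset L,
          c I * q g * q h * (w (recomb I g h) + w (recomb Iᶜ g h) - w g - w h) := by
        rw [Finset.mul_sum]
        apply Finset.sum_congr rfl; intro g _
        rw [Finset.mul_sum]
        apply Finset.sum_congr rfl; intro h _
        rw [Finset.mul_sum]
        apply Finset.sum_congr rfl; intro I _
        have expand : ∀ x : ∀ i, A i,
            (1/4) * (c I * q g * q h *
            ((if x = recomb I g h then (1:ℝ) else 0) + (if x = recomb Iᶜ g h then 1 else 0)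
              - (if x = g then 1 else 0) - (if x = h then 1 else 0)) * w x)
            = (1/4) * (c I * q g * q h) *
                ((if x = recomb I g h then (1:ℝ) else 0) * w x
                  + (if x = recomb Iᶜ g h then (1:ℝ) else 0) * w x
                  - (if x = g then (1:ℝ) else 0) * w x
                  - (if x = h then (1:ℝ) else 0) * w x) := by
          intro x; ring
        simp only [expand]
        rw [← Finset.mul_sum]
        simp only [Finset.sum_sub_distrib, Finset.sum_add_distrib, key]
        ring

lemma sum_recF_zero (c : Finset L → ℝ) (q : (∀ i, A i) → ℝ) :
    ∑ x : ∀ i, A i, recF c q x = 0 := by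
  have := sum_recF_mul c q (fun _ => 1)
  simp only [mul_one] at this
  rw [this]
  have : ∀ g h : ∀ i, A i, ∀ I : Finset L, c I * q g * q h * (1 + 1 - 1 - 1) = 0 := by
    intro g h I; ring
  simp [this]

lemma gibbs_point {P Q : ℝ} (hP : 0 < P) (hQ : 0 < Q) :
    P - Q ≤ P * (Real.log P - Real.log Q)
      ∧ (P ≠ Q → P - Q < P * (Real.log P - Real.log Q)) := by
  have hlog : Real.log (Q / P) = Real.log Q - Real.log P := Real.log_div hQ.ne' hP.ne'
  have hPQ : P * (Q / P - 1) = Q - P := by field_simp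
  constructor
  · have h1 : Real.log (Q / P) ≤ Q / P - 1 := Real.log_le_sub_one_of_pos (by positivity)
    have h2 := mul_le_mul_of_nonneg_left h1 hP.le
    rw [hlog, hPQ] at h2
    nlinarith
  · intro hne
    have hne1 : Q / P ≠ 1 := by
      intro h
      rw [div_eq_one_iff_eq hP.ne'] at h
      exact hne h.symm
    have h1 : Real.log (Q / P) < Q / P - 1 := Real.log_lt_sub_one_of_pos (by positivity) hne1
    have h2 := mul_lt_mul_of_pos_left h1 hP
    rw [hlog, hPQ] at h2
    nlinarith

end Aux2

section Aux3
variable {L : Type} [Fintype L] [DecidableEq L] {A : L → Type}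
  [∀ i, Fintype (A i)] [∀ i, DecidableEq (A i)]

lemma entropy_production (c : Finset L → ℝ) (hc : ∀ I, 0 ≤ c I)
    (q : (∀ i, A i) → ℝ) (hq : ∀ g, 0 < q g) :
    0 ≤ -∑ x : ∀ i, A i, recF c q x * Real.log (q x) ∧
    (-∑ x : ∀ i, A i, recF c q x * Real.log (q x) = 0 →
      ∀ I : Finset L, c I ≠ 0 → ∀ g h : ∀ i, A i,
        q (recomb I g h) * q (recomb I h g) = q g * q h) := by
  classical
  set φ : Finset L → (∀ i, A i) → (∀ i, A i) → ℝ := fun I g h =>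
    q g * q h * (Real.log (q g * q h) - Real.log (q (recomb I g h) * q (recomb I h g)))
    with hφ
  set ψ : Finset L → (∀ i, A i) → (∀ i, A i) → ℝ := fun I g h =>
    q g * q h - q (recomb I g h) * q (recomb I h g) with hψ
  have hpoint : ∀ (I : Finset L) (g h : ∀ i, A i), ψ I g h ≤ φ I g h := by
    intro I g h
    exact (gibbs_point (mul_pos (hq _) (hq _)) (mul_pos (hq _) (hq _))).1
  have hpoint' : ∀ (I : Finset L) (g h : ∀ i, A i),
      q g * q h ≠ q (recomb I g h) * q (recomb I h g) → ψ I g h < φ I g h := by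
    intro I g h hne
    exact (gibbs_point (mul_pos (hq _) (hq _)) (mul_pos (hq _) (hq _))).2 hne
  have hψsum : ∀ I : Finset L, ∑ g : ∀ i, A i, ∑ h : ∀ i, A i, ψ I g h = 0 := by
    intro I
    have hb := sum_recomb_pair I (fun g h => q g * q h)
    simp only [hψ, Finset.sum_sub_distrib]
    rw [hb, sub_self]
  have hmain : -∑ x : ∀ i, A i, recF c q x * Real.log (q x)
      = (1/4) * ∑ I : Finset L, c I * ∑ g : ∀ i, A i, ∑ h : ∀ i, A i, φ I g h := by
    rw [sum_recF_mul]
    have hterm : ∀ (g h : ∀ i, A i) (I : Finset L),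
        c I * q g * q h * (Real.log (q (recomb I g h)) + Real.log (q (recomb Iᶜ g h))
          - Real.log (q g) - Real.log (q h)) = -(c I * φ I g h) := by
      intro g h I
      rw [recomb_compl, hφ]
      simp only []
      rw [Real.log_mul (hq g).ne' (hq h).ne', Real.log_mul (hq _).ne' (hq _).ne']
      ring
    simp only [hterm]
    have hreorder : ∑ g : ∀ i, A i, ∑ h : ∀ i, A i, ∑ I : Finset L, -(c I * φ I g h)
        = -∑ I : Finset L, c I * ∑ g : ∀ i, A i, ∑ h : ∀ i, A i, φ I g h := by
      calc ∑ g : ∀ i, A i, ∑ h : ∀ i, A i, ∑ I : Finset L, -(c I * φ I g h)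
          = ∑ g : ∀ i, A i, ∑ I : Finset L, ∑ h : ∀ i, A i, -(c I * φ I g h) := by
            apply Finset.sum_congr rfl; intro g _; rw [Finset.sum_comm]
        _ = ∑ I : Finset L, ∑ g : ∀ i, A i, ∑ h : ∀ i, A i, -(c I * φ I g h) :=
            Finset.sum_comm
        _ = -∑ I : Finset L, c I * ∑ g : ∀ i, A i, ∑ h : ∀ i, A i, φ I g h := by
            rw [← Finset.sum_neg_distrib]
            apply Finset.sum_congr rfl; intro I _
            rw [Finset.mul_sum, ← Finset.sum_neg_distrib]
            apply Finset.sum_congr rfl; intro g _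
            rw [Finset.mul_sum, ← Finset.sum_neg_distrib]
    rw [hreorder]
    ring
  have hK : ∀ I : Finset L, 0 ≤ ∑ g : ∀ i, A i, ∑ h : ∀ i, A i, φ I g h := by
    intro I
    rw [← hψsum I]
    exact Finset.sum_le_sum fun g _ => Finset.sum_le_sum fun h _ => hpoint I g h
  have hnn : 0 ≤ -∑ x : ∀ i, A i, recF c q x * Real.log (q x) := by
    rw [hmain]
    have : 0 ≤ ∑ I : Finset L, c I * ∑ g : ∀ i, A i, ∑ h : ∀ i, A i, φ I g h :=
      Finset.sum_nonneg fun I _ => mul_nonneg (hc I) (hK I)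
    linarith
  refine ⟨hnn, ?_⟩
  intro h0 I hcI g h
  rw [hmain] at h0
  have hall := (Finset.sum_eq_zero_iff_of_nonneg
    (fun I _ => mul_nonneg (hc I) (hK I))).mp (by linarith)
  have hKI : ∑ g : ∀ i, A i, ∑ h : ∀ i, A i, φ I g h = 0 := by
    rcases mul_eq_zero.mp (hall I (Finset.mem_univ I)) with h' | h'
    · exact absurd h' hcI
    · exact h'
  by_contra hne
  have hne' : q g * q h ≠ q (recomb I g h) * q (recomb I h g) := fun e => hne e.symm
  have hlt : ∑ g : ∀ i, A i, ∑ h : ∀ i, A i, ψ I g h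
      < ∑ g : ∀ i, A i, ∑ h : ∀ i, A i, φ I g h := by
    apply Finset.sum_lt_sum
    · exact fun g _ => Finset.sum_le_sum fun h _ => hpoint I g h
    · exact ⟨g, Finset.mem_univ g, Finset.sum_lt_sum
        (fun h _ => hpoint I g h) ⟨h, Finset.mem_univ h, hpoint' I g h hne'⟩⟩
  rw [hψsum I, hKI] at hlt
  exact lt_irrefl 0 hlt

end Aux3

section Aux4
variable {L : Type} [Fintype L] [DecidableEq L] {A : L → Type}
  [∀ i, Fintype (A i)] [∀ i, DecidableEq (A i)]

lemma fac_split {q : (∀ i, A i) → ℝ} (I : Finset L)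
    (hI : ∀ g h : ∀ i, A i, q (recomb I g h) * q (recomb I h g) = q g * q h)
    (S : Finset L) (g r : ∀ i, A i) :
    q (recomb (S ∩ I) g r) * q (recomb (S \ I) g r) = q (recomb S g r) * q r := by
  have h1 : recomb I (recomb S g r) r = recomb (S ∩ I) g r := by
    funext i; simp only [recomb, Finset.mem_inter]
    by_cases hi : i ∈ I <;> by_cases hs : i ∈ S <;> simp [hi, hs]
  have h2 : recomb I r (recomb S g r) = recomb (S \ I) g r := by
    funext i; simp only [recomb, Finset.mem_sdiff]
    by_cases hi : i ∈ I <;> by_cases hs : i ∈ S <;> simp [hi, hs]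
  have := hI (recomb S g r) r
  rw [h1, h2] at this
  exact this

lemma telescope {q : (∀ i, A i) → ℝ} (hq : ∀ g, 0 < q g)
    (sep : ∀ i j : L, i ≠ j → ∃ I : Finset L,
      (∀ g h : ∀ i, A i, q (recomb I g h) * q (recomb I h g) = q g * q h) ∧ i ∈ I ∧ j ∉ I)
    (g r : ∀ i, A i) (S : Finset L) :
    q (recomb S g r) * q r ^ S.card = q r * ∏ i ∈ S, q (recomb {i} g r) := by
  induction S using Finset.strongInductionOn with
  | _ S ih =>
    by_cases h0 : S = ∅
    · subst h0; simp [recomb_empty]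
    by_cases h1 : S.card = 1
    · obtain ⟨i, rfl⟩ := Finset.card_eq_one.mp h1
      simp [mul_comm]
    have h2 : 1 < S.card := by
      have := Finset.card_pos.mpr (Finset.nonempty_of_ne_empty h0)
      omega
    obtain ⟨i, hi, j, hj, hij⟩ := Finset.one_lt_card.mp h2
    obtain ⟨I, hFac, hiI, hjI⟩ := sep i j hij
    have hsub1 : S ∩ I ⊂ S :=
      (Finset.ssubset_iff_of_subset Finset.inter_subset_left).mpr
        ⟨j, hj, fun hmem => hjI (Finset.mem_inter.mp hmem).2⟩
    have hsub2 : S \ I ⊂ S :=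
      (Finset.ssubset_iff_of_subset Finset.sdiff_subset).mpr
        ⟨i, hi, fun hmem => (Finset.mem_sdiff.mp hmem).2 hiI⟩
    have e1 := ih (S ∩ I) hsub1
    have e2 := ih (S \ I) hsub2
    have hsplit := fac_split I hFac S g r
    have hcard : (S ∩ I).card + (S \ I).card = S.card :=
      Finset.card_inter_add_card_sdiff S I
    have hprodsplit : (∏ i ∈ S ∩ I, q (recomb {i} g r)) * ∏ i ∈ S \ I, q (recomb {i} g r)
        = ∏ i ∈ S, q (recomb {i} g r) := by
      rw [← Finset.prod_union (Finset.disjoint_sdiff.mono_left Finset.inter_subset_right)]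
      congr 1
      ext x
      by_cases h : x ∈ I <;> simp [h]
    have key : (q (recomb S g r) * q r ^ S.card) * q r
        = (q r * ∏ i ∈ S, q (recomb {i} g r)) * q r := by
      calc (q (recomb S g r) * q r ^ S.card) * q r
          = (q (recomb S g r) * q r) * (q r ^ (S ∩ I).card * q r ^ (S \ I).card) := by
            rw [← pow_add, hcard]; ring
        _ = (q (recomb (S ∩ I) g r) * q r ^ (S ∩ I).card)
              * (q (recomb (S \ I) g r) * q r ^ (S \ I).card) := by
            rw [← hsplit]; ring
        _ = (q r * ∏ i ∈ S ∩ I, q (recomb {i} g r))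
              * (q r * ∏ i ∈ S \ I, q (recomb {i} g r)) := by rw [e1, e2]
        _ = (q r * ∏ i ∈ S, q (recomb {i} g r)) * q r := by
            rw [← hprodsplit]; ring
    exact mul_right_cancel₀ (hq r).ne' key

lemma prodform {q : (∀ i, A i) → ℝ} [∀ i, Nonempty (A i)] (hq : ∀ g, 0 < q g)
    (sep : ∀ i j : L, i ≠ j → ∃ I : Finset L,
      (∀ g h : ∀ i, A i, q (recomb I g h) * q (recomb I h g) = q g * q h) ∧ i ∈ I ∧ j ∉ I) :
    ∃ (C : ℝ) (f : ∀ i, A i → ℝ), 0 < C ∧ (∀ i a, 0 < f i a) ∧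
      ∀ g : ∀ i, A i, q g = C * ∏ i, f i (g i) := by
  classical
  have r : ∀ i, A i := fun i => Classical.arbitrary (A i)
  refine ⟨q r * (q r ^ Fintype.card L)⁻¹, fun i a => q (Function.update r i a),
    mul_pos (hq r) (inv_pos.mpr (pow_pos (hq r) _)), fun i a => hq _, ?_⟩
  intro g
  have ht := telescope hq sep g r Finset.univ
  rw [recomb_univ, Finset.card_univ] at ht
  have hprod : ∏ i, q (recomb {i} g r) = ∏ i, q (Function.update r i (g i)) := by
    apply Finset.prod_congr rfl; intro i _; rw [recomb_single]
  rw [hprod] at ht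
  have hne : (q r ^ Fintype.card L) ≠ 0 := pow_ne_zero _ (hq r).ne'
  field_simp
  linarith [ht]

end Aux4

section Aux5
variable {L : Type} [Fintype L] [DecidableEq L] {A : L → Type}
  [∀ i, Fintype (A i)] [∀ i, DecidableEq (A i)]

lemma M_formula (q : (∀ i, A i) → ℝ) (C : ℝ) (f : ∀ i, A i → ℝ)
    (hf : ∀ g, q g = C * ∏ i, f i (g i)) (I : Finset L) (x : ∀ i, A i) :
    ∑ g : ∀ i, A i, (if ∀ i ∈ I, x i = g i then q g else 0)
      = C * (∏ i ∈ I, f i (x i)) * ∏ i ∈ Iᶜ, ∑ a, f i a := by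
  classical
  set F2 : ∀ i, A i → ℝ :=
    fun i b => if i ∈ I then (if x i = b then f i b else 0) else f i b with hF2
  have step1 : ∀ g : ∀ i, A i, (if ∀ i ∈ I, x i = g i then q g else 0)
      = C * ∏ i, F2 i (g i) := by
    intro g
    by_cases hg : ∀ i ∈ I, x i = g i
    · rw [if_pos hg, hf g]
      congr 1
      apply Finset.prod_congr rfl; intro i _
      by_cases hi : i ∈ I
      · simp [hF2, hi, hg i hi]
      · simp [hF2, hi]
    · rw [if_neg hg]
      push_neg at hg
      obtain ⟨i, hiI, hne⟩ := hg
      rw [Finset.prod_eq_zero (Finset.mem_univ i) (by simp [hF2, hiI, hne])]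
      ring
  simp only [step1]
  rw [← Finset.mul_sum, sum_prod_pi F2]
  have step2 : ∀ i : L, (∑ a : A i, F2 i a)
      = if i ∈ I then f i (x i) else ∑ a : A i, f i a := by
    intro i
    by_cases hi : i ∈ I <;> simp [hF2, hi]
  simp only [step2]
  rw [← Finset.prod_mul_prod_compl I
    (fun i => if i ∈ I then f i (x i) else ∑ a : A i, f i a)]
  rw [mul_assoc]
  congr 1
  congr 1
  · apply Finset.prod_congr rfl; intro i hi; simp [hi]
  · apply Finset.prod_congr rfl; intro i hi
    simp [Finset.mem_compl.mp hi]

lemma marg_formula (q : (∀ i, A i) → ℝ) (C : ℝ) (f : ∀ i, A i → ℝ)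
    (hf : ∀ g, q g = C * ∏ i, f i (g i)) (r : ∀ i, A i) (i : L) (a : A i) :
    marg q i a = C * f i a * ∏ j ∈ ({i} : Finset L)ᶜ, ∑ b, f j b := by
  classical
  have hM := M_formula q C f hf {i} (Function.update r i a)
  have hcond : ∀ g : ∀ j, A j,
      (if ∀ j ∈ ({i} : Finset L), Function.update r i a j = g j then q g else 0)
      = (if g i = a then q g else 0) := by
    intro g
    have hiff : (∀ j ∈ ({i} : Finset L), Function.update r i a j = g j) ↔ g i = a := by
      simp [eq_comm]
    rw [if_congr hiff rfl rfl]
  calc marg q i a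
      = ∑ g : ∀ j, A j,
          (if ∀ j ∈ ({i} : Finset L), Function.update r i a j = g j then q g else 0) :=
        Finset.sum_congr rfl fun g _ => (hcond g).symm
    _ = (C * ∏ j ∈ ({i} : Finset L), f j (Function.update r i a j))
          * ∏ j ∈ ({i} : Finset L)ᶜ, ∑ b, f j b := hM
    _ = C * f i a * ∏ j ∈ ({i} : Finset L)ᶜ, ∑ b, f j b := by
        rw [Finset.prod_singleton, Function.update_self]

end Aux5

section Aux6
variable {L : Type} [Fintype L] [DecidableEq L] {A : L → Type}
  [∀ i, Fintype (A i)] [∀ i, DecidableEq (A i)]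

lemma prod_marg (q : (∀ i, A i) → ℝ) (C : ℝ) (f : ∀ i, A i → ℝ) [∀ i, Nonempty (A i)]
    (hfpos : ∀ i a, 0 < f i a)
    (hf : ∀ g, q g = C * ∏ i, f i (g i)) (hq1 : ∑ g : ∀ i, A i, q g = 1) :
    ∀ g : ∀ i, A i, q g = ∏ i, marg q i (g i) := by
  classical
  have r : ∀ i, A i := fun i => Classical.arbitrary (A i)
  have hFpos : ∀ i, 0 < ∑ a, f i a :=
    fun i => Finset.sum_pos (fun a _ => hfpos i a) Finset.univ_nonempty
  have hC1 : C * ∏ i, ∑ a, f i a = 1 := by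
    rw [← hq1, Finset.sum_congr rfl fun g _ => hf g, ← Finset.mul_sum, sum_prod_pi f]
  have hmarg : ∀ (i : L) (a : A i), marg q i a = f i a / (∑ b, f i b) := by
    intro i a
    rw [marg_formula q C f hf r i a, eq_div_iff (hFpos i).ne']
    have h2 : (∏ j ∈ ({i} : Finset L)ᶜ, ∑ b, f j b) * (∑ b, f i b)
        = ∏ j, ∑ b, f j b := by
      rw [← Finset.prod_singleton (f := fun j => ∑ b, f j b) (a := i)]
      exact Finset.prod_compl_mul_prod {i} _
    linear_combination f i a * C * h2 + f i a * hC1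
  intro g
  have hP : ∏ i, marg q i (g i) = ∏ i, f i (g i) / (∑ b, f i b) :=
    Finset.prod_congr rfl fun i _ => by rw [hmarg]
  rw [hP, Finset.prod_div_distrib, hf g]
  rw [eq_div_iff (Finset.prod_ne_zero_iff.mpr fun i _ => (hFpos i).ne')]
  linear_combination (∏ i, f i (g i)) * hC1

lemma triple_swap {α β γ : Type} [Fintype α] [Fintype β] [Fintype γ] (v : α → β → γ → ℝ) :
    ∑ g : α, ∑ h : β, ∑ I : γ, v g h I = ∑ I : γ, ∑ g : α, ∑ h : β, v g h I := by
  calc ∑ g : α, ∑ h : β, ∑ I : γ, v g h I = ∑ g : α, ∑ I : γ, ∑ h : β, v g h I :=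
        Finset.sum_congr rfl fun g _ => Finset.sum_comm
    _ = ∑ I : γ, ∑ g : α, ∑ h : β, v g h I := Finset.sum_comm

lemma double_comb {α β : Type} [Fintype α] [Fintype β] (c : ℝ) (a b d e : α → β → ℝ) :
    ∑ g : α, ∑ h : β, c * (a g h + b g h - d g h - e g h)
      = c * ((∑ g : α, ∑ h : β, a g h) + (∑ g : α, ∑ h : β, b g h)
          - (∑ g : α, ∑ h : β, d g h) - (∑ g : α, ∑ h : β, e g h)) := by
  simp only [mul_add, mul_sub, Finset.sum_add_distrib, Finset.sum_sub_distrib,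
    ← Finset.mul_sum]

lemma recF_eq_zero (c : Finset L → ℝ) (q : (∀ i, A i) → ℝ) (C : ℝ) (f : ∀ i, A i → ℝ)
    (hf : ∀ g, q g = C * ∏ i, f i (g i)) (hq1 : ∑ g : ∀ i, A i, q g = 1) :
    recF c q = 0 := by
  classical
  have hC1 : C * ∏ i, ∑ a, f i a = 1 := by
    rw [← hq1, Finset.sum_congr rfl fun g _ => hf g, ← Finset.mul_sum, sum_prod_pi f]
  funext x
  have key : ∀ I : Finset L,
      ∑ g : ∀ i, A i, ∑ h : ∀ i, A i,
        q g * q h * (if x = recomb I g h then (1:ℝ) else 0) = q x := by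
    intro I
    have hsplit : ∀ g h : ∀ i, A i,
        q g * q h * (if x = recomb I g h then (1:ℝ) else 0)
        = (if ∀ i ∈ I, x i = g i then q g else 0)
            * (if ∀ i ∈ Iᶜ, x i = h i then q h else 0) := by
      intro g h
      by_cases hx : x = recomb I g h
      · obtain ⟨h1, h2⟩ := (eq_recomb_iff I x g h).mp hx
        rw [if_pos hx, if_pos h1, if_pos h2, mul_one]
      · rw [if_neg hx, mul_zero]
        by_cases h1 : ∀ i ∈ I, x i = g i
        · by_cases h2 : ∀ i ∈ Iᶜ, x i = h i
          · exact absurd ((eq_recomb_iff I x g h).mpr ⟨h1, h2⟩) hx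
          · rw [if_neg h2, mul_zero]
        · rw [if_neg h1, zero_mul]
    calc ∑ g : ∀ i, A i, ∑ h : ∀ i, A i,
            q g * q h * (if x = recomb I g h then (1:ℝ) else 0)
        = ∑ g : ∀ i, A i, ∑ h : ∀ i, A i,
            (if ∀ i ∈ I, x i = g i then q g else 0)
              * (if ∀ i ∈ Iᶜ, x i = h i then q h else 0) :=
          Finset.sum_congr rfl fun g _ => Finset.sum_congr rfl fun h _ => hsplit g h
      _ = (∑ g : ∀ i, A i, if ∀ i ∈ I, x i = g i then q g else 0)
            * (∑ h : ∀ i, A i, if ∀ i ∈ Iᶜ, x i = h i then q h else 0) :=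
          (Finset.sum_mul_sum _ _ _ _).symm
      _ = (C * (∏ i ∈ I, f i (x i)) * ∏ i ∈ Iᶜ, ∑ a, f i a)
            * (C * (∏ i ∈ Iᶜ, f i (x i)) * ∏ i ∈ Iᶜᶜ, ∑ a, f i a) := by
          rw [M_formula q C f hf I x, M_formula q C f hf Iᶜ x]
      _ = (C * ∏ i, f i (x i)) * (C * ∏ i, ∑ a, f i a) := by
          rw [compl_compl, ← Finset.prod_mul_prod_compl I (fun i => f i (x i)),
            ← Finset.prod_mul_prod_compl I (fun i => ∑ a, f i a)]
          ring
      _ = q x := by rw [hC1, mul_one, ← hf x]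
  have keyg : ∑ g : ∀ i, A i, ∑ h : ∀ i, A i,
      q g * q h * (if x = g then (1:ℝ) else 0) = q x := by
    have hinner : ∀ g : ∀ i, A i,
        ∑ h : ∀ i, A i, q g * q h * (if x = g then (1:ℝ) else 0)
        = (if x = g then q g else 0) := by
      intro g
      have e1 : ∑ h : ∀ i, A i, q g * q h * (if x = g then (1:ℝ) else 0)
          = (q g * (if x = g then (1:ℝ) else 0)) * ∑ h : ∀ i, A i, q h := by
        rw [Finset.mul_sum]
        exact Finset.sum_congr rfl fun h _ => by ring
      rw [e1, hq1, mul_one]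
      by_cases hxg : x = g <;> simp [hxg]
    rw [Finset.sum_congr rfl fun g _ => hinner g]
    simp
  have keyh : ∑ g : ∀ i, A i, ∑ h : ∀ i, A i,
      q g * q h * (if x = h then (1:ℝ) else 0) = q x := by
    have hinner : ∀ g : ∀ i, A i,
        ∑ h : ∀ i, A i, q g * q h * (if x = h then (1:ℝ) else 0) = q g * q x := by
      intro g
      have e1 : ∑ h : ∀ i, A i, q g * q h * (if x = h then (1:ℝ) else 0)
          = q g * ∑ h : ∀ i, A i, q h * (if x = h then (1:ℝ) else 0) := by
        rw [Finset.mul_sum]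
        exact Finset.sum_congr rfl fun h _ => by ring
      rw [e1]
      congr 1
      simp [mul_ite]
    rw [Finset.sum_congr rfl fun g _ => hinner g, ← Finset.sum_mul, hq1, one_mul]
  show recF c q x = (0 : (∀ i, A i) → ℝ) x
  simp only [recF, Pi.zero_apply]
  rw [triple_swap]
  have hI0 : ∀ I : Finset L, ∑ g : ∀ i, A i, ∑ h : ∀ i, A i,
      c I * q g * q h *
        ((if x = recomb I g h then (1:ℝ) else 0) + (if x = recomb Iᶜ g h then 1 else 0)
          - (if x = g then 1 else 0) - (if x = h then 1 else 0)) = 0 := by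
    intro I
    have hexp : ∀ g h : ∀ i, A i, c I * q g * q h *
        ((if x = recomb I g h then (1:ℝ) else 0) + (if x = recomb Iᶜ g h then 1 else 0)
          - (if x = g then 1 else 0) - (if x = h then 1 else 0))
        = c I * ((q g * q h * (if x = recomb I g h then (1:ℝ) else 0))
            + (q g * q h * (if x = recomb Iᶜ g h then (1:ℝ) else 0))
            - (q g * q h * (if x = g then (1:ℝ) else 0))
            - (q g * q h * (if x = h then (1:ℝ) else 0))) := fun g h => by ring
    rw [Finset.sum_congr rfl fun g _ => Finset.sum_congr rfl fun h _ => hexp g h,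
      double_comb, key I, key Iᶜ, keyg, keyh]
    ring
  rw [Finset.sum_congr rfl fun I _ => hI0 I]
  simp

end Aux6

/-- **The entropy is a Lyapunov function for the recombination dynamics.**
Under the standing assumption, along any differentiable strictly positive solution in the
simplex, the entropy `H(p) = −Σ_g p(g) ln p(g)` is non-decreasing in `t`, and its
derivative vanishes at time `t` exactly when `p(t)` is an equilibrium, equivalently, when
`p(t)` is the product of its marginals. -/
theorem entropy_is_lyapunov_function
    {L : Type} [Fintype L] [DecidableEq L] [Nonempty L]
    (A : L → Type) [∀ i, Fintype (A i)] [∀ i, DecidableEq (A i)]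
    (hA : ∀ i, 2 ≤ Fintype.card (A i))
    (c : Finset L → ℝ) (hc : ∀ I, 0 ≤ c I) (hcsym : ∀ I, c I = c Iᶜ)
    (hsep : ∀ i j : L, i ≠ j →
      0 < ∑ I ∈ univ.filter (fun I : Finset L => i ∈ I ∧ j ∉ I), c I)
    (p : ℝ → (∀ i, A i) → ℝ)
    (hpos : ∀ t, 0 ≤ t → ∀ g, 0 < p t g)
    (hsum : ∀ t, 0 ≤ t → ∑ g : ∀ i, A i, p t g = 1)
    (hode : ∀ t, 0 ≤ t → HasDerivAt p (recF c (p t)) t) :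
    (∀ t₁ t₂, 0 ≤ t₁ → t₁ ≤ t₂ →
      -∑ g : ∀ i, A i, p t₁ g * Real.log (p t₁ g)
        ≤ -∑ g : ∀ i, A i, p t₂ g * Real.log (p t₂ g)) ∧
    (∀ t, 0 ≤ t → ∃ d : ℝ,
      HasDerivAt (fun s => -∑ g : ∀ i, A i, p s g * Real.log (p s g)) d t ∧
      0 ≤ d ∧
      (d = 0 ↔ recF c (p t) = 0) ∧
      (d = 0 ↔ ∀ g : ∀ i, A i, p t g = ∏ i : L, marg (p t) i (g i))) := by
  classical
  haveI hnA : ∀ i, Nonempty (A i) := fun i =>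
    Fintype.card_pos_iff.mp (lt_of_lt_of_le (by norm_num) (hA i))
  set D : ℝ → ℝ := fun t => -∑ g : ∀ i, A i, (Real.log (p t g) + 1) * recF c (p t) g
    with hD
  have hderiv : ∀ t, 0 ≤ t → HasDerivAt
      (fun s => -∑ g : ∀ i, A i, p s g * Real.log (p s g)) (D t) t := by
    intro t ht
    have hcoord : ∀ g : ∀ i, A i, HasDerivAt (fun s => p s g) (recF c (p t) g) t := by
      intro g
      have := (ContinuousLinearMap.proj (R := ℝ)
        (φ := fun _ : (∀ i, A i) => ℝ) g).hasFDerivAt.comp_hasDerivAt t (hode t ht)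
      simpa [Function.comp_def] using this
    have hsum' : HasDerivAt (fun s => ∑ g : ∀ i, A i, p s g * Real.log (p s g))
        (∑ g : ∀ i, A i, (Real.log (p t g) + 1) * recF c (p t) g) t := by
      apply HasDerivAt.fun_sum
      intro g _
      have h2 : HasDerivAt (fun y : ℝ => y * Real.log y) (Real.log (p t g) + 1) (p t g) :=
        Real.hasDerivAt_mul_log (hpos t ht g).ne'
      exact h2.comp t (hcoord g)
    simpa [hD, Pi.neg_def] using hsum'.neg
  have hDval : ∀ t, 0 ≤ t → D t = -∑ x : ∀ i, A i, recF c (p t) x * Real.log (p t x) := by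
    intro t ht
    have h0 : ∑ x : ∀ i, A i, recF c (p t) x = 0 := sum_recF_zero c (p t)
    have hsplit : ∑ g : ∀ i, A i, (Real.log (p t g) + 1) * recF c (p t) g
        = (∑ g : ∀ i, A i, recF c (p t) g * Real.log (p t g))
            + ∑ g : ∀ i, A i, recF c (p t) g := by
      rw [← Finset.sum_add_distrib]
      exact Finset.sum_congr rfl fun g _ => by ring
    simp only [hD]
    rw [hsplit, h0, add_zero]
  have hDnonneg : ∀ t, 0 ≤ t → 0 ≤ D t := by
    intro t ht
    rw [hDval t ht]
    exact (entropy_production c hc (p t) (hpos t ht)).1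
  have hEquiv : ∀ t, 0 ≤ t → ((D t = 0 ↔ recF c (p t) = 0) ∧
      (D t = 0 ↔ ∀ g : ∀ i, A i, p t g = ∏ i : L, marg (p t) i (g i))) := by
    intro t ht
    have fwd : D t = 0 →
        (∀ g : ∀ i, A i, p t g = ∏ i : L, marg (p t) i (g i)) ∧ recF c (p t) = 0 := by
      intro h0
      rw [hDval t ht] at h0
      have hFac := (entropy_production c hc (p t) (hpos t ht)).2 h0
      have sep : ∀ i j : L, i ≠ j → ∃ I : Finset L,
          (∀ g h : ∀ i, A i, p t (recomb I g h) * p t (recomb I h g) = p t g * p t h)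
            ∧ i ∈ I ∧ j ∉ I := by
        intro i j hij
        obtain ⟨I, hmem, hcne⟩ :=
          Finset.exists_ne_zero_of_sum_ne_zero (hsep i j hij).ne'
        rw [Finset.mem_filter] at hmem
        exact ⟨I, hFac I hcne, hmem.2.1, hmem.2.2⟩
      obtain ⟨C, f, hC, hfpos, hf⟩ := prodform (hpos t ht) sep
      exact ⟨prod_marg (p t) C f hfpos hf (hsum t ht),
        recF_eq_zero c (p t) C f hf (hsum t ht)⟩
    have bk1 : recF c (p t) = 0 → D t = 0 := by
      intro h0
      simp only [hD, h0, Pi.zero_apply, mul_zero, Finset.sum_const_zero, neg_zero]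
    have bk2 : (∀ g : ∀ i, A i, p t g = ∏ i : L, marg (p t) i (g i)) → D t = 0 := by
      intro hm
      apply bk1
      apply recF_eq_zero c (p t) 1 (fun i a => marg (p t) i a) _ (hsum t ht)
      intro g
      rw [one_mul]
      exact hm g
    exact ⟨⟨fun h => (fwd h).2, bk1⟩, ⟨fun h => (fwd h).1, bk2⟩⟩
  constructor
  · intro t₁ t₂ ht₁ ht12
    have hmono : MonotoneOn (fun s => -∑ g : ∀ i, A i, p s g * Real.log (p s g))
        (Set.Icc t₁ t₂) := by
      apply monotoneOn_of_deriv_nonneg (convex_Icc t₁ t₂)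
      · intro s hs
        exact (hderiv s (le_trans ht₁ hs.1)).continuousAt.continuousWithinAt
      · intro s hs
        rw [interior_Icc] at hs
        exact ((hderiv s (le_trans ht₁ hs.1.le)).differentiableAt).differentiableWithinAt
      · intro s hs
        rw [interior_Icc] at hs
        have hs0 : 0 ≤ s := le_trans ht₁ hs.1.le
        rw [(hderiv s hs0).deriv]
        exact hDnonneg s hs0
    exact hmono (Set.left_mem_Icc.mpr ht12) (Set.right_mem_Icc.mpr ht12) ht12
  · intro t ht
    exact ⟨D t, hderiv t ht, hDnonneg t ht, (hEquiv t ht).1, (hEquiv t ht).2⟩
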